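/- For every graph automorphism A of the model graph G there is a unique graph automorphism a of the Farey graph 𝔽 such that A maps the Farey vertex x to the Farey vertex a(x) for all x, and the resulting restriction map Aut(G) → Aut(𝔽) is a group isomorphism. -/

import Mathlib

/-- Adjacency relation of the Farey graph on `Option ℚ`: `some x` and `some y` are
adjacent iff `|x.num * y.den - y.num * x.den| = 1`, and `none` (representing `∞`)
is adjacent to `some x` iff `x.den = 1`. -/
def fareyAdj : Option ℚ → Option ℚ → Prop
  | some x, some y => |x.num * (y.den : ℤ) - y.num * (x.den : ℤ)| = 1
  | some x, none => x.den = 1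
  | none, some x => x.den = 1
  | none, none => False

/-- The Farey graph `𝔽` on the vertex set `Option ℚ`. -/
def fareyGraph : SimpleGraph (Option ℚ) where
  Adj := fareyAdj
  symm := ⟨by
    rintro (_ | x) (_ | y) h
    · exact h.elim
    · exact h
    · exact h
    · show |y.num * (x.den : ℤ) - x.num * (y.den : ℤ)| = 1
      rw [abs_sub_comm]
      exact h⟩
  loopless := ⟨by
    rintro (_ | x) h
    · exact h.elim
    · have : |x.num * (x.den : ℤ) - x.num * (x.den : ℤ)| = 1 := h
      simp at this⟩

/-- A triangle of the Farey graph: a 3-element clique. -/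
def FareyTriangle : Type := {s : Finset (Option ℚ) // fareyGraph.IsNClique 3 s}

/-- The Farey dual graph `𝔽*`: vertices are the triangles of the Farey graph, two
triangles being adjacent iff they are distinct and share exactly two vertices. -/
def fareyDual : SimpleGraph FareyTriangle where
  Adj T T' := T ≠ T' ∧ (T.1 ∩ T'.1).card = 2
  symm := ⟨by
    rintro T T' ⟨h1, h2⟩
    exact ⟨h1.symm, by rwa [Finset.inter_comm]⟩⟩
  loopless := ⟨fun T h => h.1 rfl⟩

/-- Vertices of the model graph: Farey vertices `.inl x`, dual vertices
`.inr (.inl x)` (written `x̃`), and triangle-vertices `.inr (.inr T)`. -/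
abbrev ModelVertex : Type := Option ℚ ⊕ (Option ℚ ⊕ FareyTriangle)

/-- Adjacency relation of the model graph `G`. -/
def modelAdj : ModelVertex → ModelVertex → Prop
  | .inl x, .inl y => fareyGraph.Adj x y
  | .inl x, .inr (.inl y) => x = y
  | .inr (.inl x), .inl y => x = y
  | .inr (.inl x), .inr (.inr T) => x ∈ T.1
  | .inr (.inr T), .inr (.inl x) => x ∈ T.1
  | .inr (.inr T), .inr (.inr T') => T ≠ T' ∧ (T.1 ∩ T'.1).card = 2
  | _, _ => False

/-- The model graph `G` of the pants graph of `N₃`: on `V(𝔽) ⊔ V(𝔽) ⊔ T(𝔽)`, with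
edges `x—y` for `x, y` adjacent in `𝔽`, `x̃—x`, `x̃—T` whenever `x ∈ T`, and `T—T'`
whenever `T ≠ T'` and `|T ∩ T'| = 2`. -/
def modelGraph : SimpleGraph ModelVertex where
  Adj := modelAdj
  symm := ⟨by
    rintro (x | x | T) (y | y | T') h
    · exact fareyGraph.symm.symm _ _ h
    · exact h.symm
    · exact h.elim
    · exact h.symm
    · exact h.elim
    · exact h
    · exact h.elim
    · exact h
    · exact ⟨h.1.symm, by
        have := h.2
        rwa [Finset.inter_comm]⟩⟩
  loopless := ⟨by
    rintro (x | x | T) h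
    · exact fareyGraph.loopless.irrefl x h
    · exact h.elim
    · exact h.1 rfl⟩

namespace FareyAux

def vnum : Option ℚ → ℤ
  | none => 1
  | some x => x.num

def vden : Option ℚ → ℤ
  | none => 0
  | some x => (x.den : ℤ)

lemma vden_nonneg (u : Option ℚ) : 0 ≤ vden u := by
  cases u with
  | none => simp [vden]
  | some x => show (0:ℤ) ≤ (x.den:ℤ); positivity

lemma adj_iff (u v : Option ℚ) :
    fareyGraph.Adj u v ↔ |vnum u * vden v - vnum v * vden u| = 1 := by
  cases u with
  | none =>
    cases v with
    | none => simp [fareyGraph, fareyAdj, vnum, vden]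
    | some y =>
      show fareyAdj none (some y) ↔ _
      simp only [fareyAdj, vnum, vden]
      rw [one_mul, mul_zero, sub_zero, Int.abs_natCast]
      omega
  | some x =>
    cases v with
    | none =>
      show fareyAdj (some x) none ↔ _
      simp only [fareyAdj, vnum, vden]
      rw [mul_zero, one_mul, zero_sub, abs_neg, Int.abs_natCast]
      omega
    | some y => exact Iff.rfl

lemma nd_inj : Function.Injective (fun z : Option ℚ => (vnum z, vden z)) := by
  rintro (_ | x) (_ | y) h <;> simp only [vnum, vden, Prod.mk.injEq] at h
  · rfl
  · exact absurd h.2.symm (by exact_mod_cast y.den_nz ∘ fun hh => by exact_mod_cast hh)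
  · exact absurd h.2 (by exact_mod_cast x.den_nz ∘ fun hh => by exact_mod_cast hh)
  · exact congrArg some (Rat.ext h.1 (by exact_mod_cast h.2))

lemma coprime (u : Option ℚ) : IsCoprime (vnum u) (vden u) := by
  cases u with
  | none => exact isCoprime_one_left
  | some x =>
    rw [Int.isCoprime_iff_gcd_eq_one]
    simpa [Int.gcd, vnum, vden, Nat.Coprime] using x.reduced

def mkv (a b : ℤ) (hb : b ≠ 0) (h : IsCoprime a b) (hb' : 0 ≤ b) : Option ℚ :=
  some (Rat.mk' a b.toNat (by omega) (by
    rw [Int.isCoprime_iff_gcd_eq_one] at h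
    simpa [Int.gcd, Int.natAbs_eq_iff, Nat.Coprime] using (by
      have : b.natAbs = b.toNat := by omega
      rw [← this]; exact h)))

@[simp] lemma vnum_mkv (a b : ℤ) (hb h hb') : vnum (mkv a b hb h hb') = a := rfl

@[simp] lemma vden_mkv (a b : ℤ) (hb h hb') : vden (mkv a b hb h hb') = b := by
  show ((b.toNat : ℕ) : ℤ) = b
  omega

/-- Every vertex of the Farey graph has infinitely many neighbours. -/
lemma nbr_infinite (u : Option ℚ) : (fareyGraph.neighborSet u).Infinite := by
  cases u with
  | none =>
    apply Set.infinite_of_injective_forall_mem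
      (f := fun k : ℕ => (some ((k : ℚ)) : Option ℚ))
    · intro k l hkl
      simp only [Option.some_inj, Nat.cast_inj] at hkl
      exact hkl
    · intro k
      show fareyAdj none (some _)
      simp [fareyAdj]
  | some x =>
    obtain ⟨a, b, hab⟩ := coprime (some x)
    have hD : (1:ℤ) ≤ vden (some x) := by
      show (1:ℤ) ≤ (x.den : ℤ)
      exact_mod_cast x.pos
    have hpos : ∀ k : ℕ, 0 < a + ((k:ℤ) + |a| + 1) * vden (some x) := by
      intro k
      have h1 : (0:ℤ) ≤ ((k:ℤ) + |a| + 1) * (vden (some x) - 1) :=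
        mul_nonneg (by positivity) (by linarith)
      have h2 : -|a| ≤ a := neg_abs_le a
      nlinarith [abs_nonneg a]
    have hkey : ∀ k : ℕ,
        vnum (some x) * (a + ((k:ℤ) + |a| + 1) * vden (some x)) -
          (-b + ((k:ℤ) + |a| + 1) * vnum (some x)) * vden (some x) = 1 := by
      intro k
      linear_combination hab
    have hcop : ∀ k : ℕ,
        IsCoprime (-b + ((k:ℤ) + |a| + 1) * vnum (some x))
          (a + ((k:ℤ) + |a| + 1) * vden (some x)) := by
      intro k
      exact ⟨-vden (some x), vnum (some x), by linear_combination hkey k⟩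
    apply Set.infinite_of_injective_forall_mem
      (f := fun k : ℕ => mkv (-b + ((k:ℤ) + |a| + 1) * vnum (some x))
        (a + ((k:ℤ) + |a| + 1) * vden (some x)) (hpos k).ne' (hcop k) (hpos k).le)
    · intro k l hkl
      have := congrArg vden hkl
      rw [vden_mkv, vden_mkv] at this
      have h3 : ((k:ℤ) - (l:ℤ)) * vden (some x) = 0 := by linarith
      rcases mul_eq_zero.mp h3 with h4 | h4
      · omega
      · omega
    · intro k
      rw [SimpleGraph.mem_neighborSet, adj_iff, vnum_mkv, vden_mkv, hkey k]
      exact abs_one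

/-- Any edge of the Farey graph extends to a triangle (via the mediant). -/
lemma exists_tri_pair (u w : Option ℚ) (h : fareyGraph.Adj u w) :
    ∃ T : FareyTriangle, u ∈ T.1 ∧ w ∈ T.1 := by
  classical
  have habs : |vnum u * vden w - vnum w * vden u| = 1 := (adj_iff u w).mp h
  have hE : 0 < vden u + vden w := by
    rcases (vden_nonneg u).lt_or_eq with h1 | h1
    · linarith [vden_nonneg w]
    rcases (vden_nonneg w).lt_or_eq with h2 | h2
    · linarith
    · exfalso
      rw [← h1, ← h2] at habs
      simp at habs
  have hcop : IsCoprime (vnum u + vnum w) (vden u + vden w) := by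
    rcases abs_eq (by norm_num : (0:ℤ) ≤ 1) |>.mp habs with hd | hd
    · exact ⟨-vden u, vnum u, by linear_combination hd⟩
    · exact ⟨vden u, -vnum u, by linear_combination -hd⟩
  set m : Option ℚ := mkv (vnum u + vnum w) (vden u + vden w) hE.ne' hcop hE.le with hm
  have hum : fareyGraph.Adj u m := by
    rw [adj_iff, hm, vnum_mkv, vden_mkv]
    rcases abs_eq (by norm_num : (0:ℤ) ≤ 1) |>.mp habs with hd | hd
    · rw [show vnum u * (vden u + vden w) - (vnum u + vnum w) * vden u = 1 by
        linear_combination hd]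
      exact abs_one
    · rw [show vnum u * (vden u + vden w) - (vnum u + vnum w) * vden u = -1 by
        linear_combination hd]
      norm_num
  have hwm : fareyGraph.Adj w m := by
    rw [adj_iff, hm, vnum_mkv, vden_mkv]
    rcases abs_eq (by norm_num : (0:ℤ) ≤ 1) |>.mp habs with hd | hd
    · rw [show vnum w * (vden u + vden w) - (vnum u + vnum w) * vden w = -1 by
        linear_combination -hd]
      norm_num
    · rw [show vnum w * (vden u + vden w) - (vnum u + vnum w) * vden w = 1 by
        linear_combination -hd]
      exact abs_one
  refine ⟨⟨{u, w, m}, ?_⟩, ?_, ?_⟩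
  · rw [SimpleGraph.is3Clique_triple_iff]
    exact ⟨h, hum, hwm⟩
  · simp
  · simp

/-- Every Farey vertex lies in infinitely many triangles. -/
lemma tri_infinite (u : Option ℚ) : {T : FareyTriangle | u ∈ T.1}.Infinite := by
  intro hfin
  have hsub : fareyGraph.neighborSet u ⊆
      ⋃ T ∈ {T : FareyTriangle | u ∈ T.1}, (T.1 : Set (Option ℚ)) := by
    intro w hw
    obtain ⟨T, hT1, hT2⟩ := exists_tri_pair u w hw
    exact Set.mem_biUnion hT1 hT2
  exact nbr_infinite u
    (Set.Finite.subset (Set.Finite.biUnion hfin fun T _ => T.1.finite_toSet) hsub)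

/-- The common neighbours of an edge of the Farey graph form a finite set. -/
lemma common_finite (u v : Option ℚ) (huv : fareyGraph.Adj u v) :
    {z | fareyGraph.Adj u z ∧ fareyGraph.Adj v z}.Finite := by
  have hP : ({((vnum v + vnum u, vden v + vden u) : ℤ × ℤ),
      (vnum v - vnum u, vden v - vden u),
      (-vnum v + vnum u, -vden v + vden u),
      (-vnum v - vnum u, -vden v - vden u)} : Set (ℤ × ℤ)).Finite := by
    apply Set.Finite.insert
    apply Set.Finite.insert
    apply Set.Finite.insert
    exact Set.finite_singleton _
  apply Set.Finite.subset (Set.Finite.preimage (Function.Injective.injOn nd_inj) hP)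
  rintro z ⟨h1, h2⟩
  rw [adj_iff, abs_eq (by norm_num : (0:ℤ) ≤ 1)] at h1 h2
  have huv' := (adj_iff u v).mp huv
  rw [abs_eq (by norm_num : (0:ℤ) ≤ 1)] at huv'
  have idN : (vnum u * vden v - vnum v * vden u) * vnum z =
      (vnum u * vden z - vnum z * vden u) * vnum v -
      (vnum v * vden z - vnum z * vden v) * vnum u := by ring
  have idD : (vnum u * vden v - vnum v * vden u) * vden z =
      (vnum u * vden z - vnum z * vden u) * vden v -
      (vnum v * vden z - vnum z * vden v) * vden u := by ring
  simp only [Set.mem_preimage, Set.mem_insert_iff, Set.mem_singleton_iff, Prod.mk.injEq]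
  rcases huv' with hD | hD <;> rcases h1 with ha | ha <;> rcases h2 with hb | hb <;>
    rw [hD, ha, hb] at idN idD <;> omega

end FareyAux

namespace ModelAux

open FareyAux

lemma tri_val_inj : Function.Injective
    (Subtype.val : FareyTriangle → Finset (Option ℚ)) :=
  Subtype.val_injective

lemma tri_card (T : FareyTriangle) : T.1.card = 3 := T.2.card_eq

/-- The set of triangles sharing two vertices with a given triangle is finite. -/
lemma dualNbrs_finite (T : FareyTriangle) :
    {T' : FareyTriangle | T ≠ T' ∧ (T.1 ∩ T'.1).card = 2}.Finite := by
  classical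
  set U : Set (Option ℚ) := ↑T.1 ∪ ⋃ a ∈ T.1, ⋃ b ∈ T.1,
      {z | fareyGraph.Adj a z ∧ fareyGraph.Adj b z ∧ a ≠ b} with hU
  have hUfin : U.Finite := by
    refine (T.1.finite_toSet).union ?_
    refine Set.Finite.biUnion T.1.finite_toSet fun a ha => ?_
    refine Set.Finite.biUnion T.1.finite_toSet fun b hb => ?_
    by_cases hab : a = b
    · convert Set.finite_empty using 1
      ext z
      simp [hab]
    · have hadj : fareyGraph.Adj a b := T.2.isClique ha hb hab
      exact (common_finite a b hadj).subset fun z hz => ⟨hz.1, hz.2.1⟩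
  have hsubs : ({s : Finset (Option ℚ) | ↑s ⊆ U}).Finite :=
    Set.Finite.preimage Finset.coe_injective.injOn hUfin.finite_subsets
  refine (Set.Finite.preimage tri_val_inj.injOn hsubs).subset ?_
  rintro T' ⟨hne, hcard⟩
  show (T'.1 : Set (Option ℚ)) ⊆ U
  intro y hy
  rw [Finset.mem_coe] at hy
  by_cases hyT : y ∈ T.1
  · exact Or.inl hyT
  · obtain ⟨a, b, hab, habs⟩ := Finset.card_eq_two.mp hcard
    have haT : a ∈ T.1 := (Finset.mem_inter.mp (habs ▸ Finset.mem_insert_self a {b})).1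
    have haT' : a ∈ T'.1 := (Finset.mem_inter.mp (habs ▸ Finset.mem_insert_self a {b})).2
    have hbmem : b ∈ T.1 ∩ T'.1 := habs ▸ Finset.mem_insert_of_mem (Finset.mem_singleton_self b)
    have hbT : b ∈ T.1 := (Finset.mem_inter.mp hbmem).1
    have hbT' : b ∈ T'.1 := (Finset.mem_inter.mp hbmem).2
    have hya : y ≠ a := fun h => hyT (h ▸ haT)
    have hyb : y ≠ b := fun h => hyT (h ▸ hbT)
    refine Or.inr ?_
    refine Set.mem_biUnion haT ?_
    refine Set.mem_biUnion hbT ?_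
    exact ⟨T'.2.isClique haT' hy (Ne.symm hya),
      T'.2.isClique hbT' hy (Ne.symm hyb), hab⟩

/-- Triangle vertices of the model graph have finite degree. -/
lemma tri_fin (T : FareyTriangle) :
    (modelGraph.neighborSet (Sum.inr (Sum.inr T) : ModelVertex)).Finite := by
  classical
  have h1 : ((fun x : Option ℚ => (Sum.inr (Sum.inl x) : ModelVertex)) '' ↑T.1).Finite :=
    (T.1.finite_toSet).image _
  have h2 : ((fun T' : FareyTriangle => (Sum.inr (Sum.inr T') : ModelVertex)) ''
      {T' | T ≠ T' ∧ (T.1 ∩ T'.1).card = 2}).Finite := (dualNbrs_finite T).image _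
  refine (h1.union h2).subset ?_
  rintro (x | x | T') hv
  · exact hv.elim
  · exact Or.inl ⟨x, hv, rfl⟩
  · exact Or.inr ⟨T', hv, rfl⟩

/-- Farey vertices of the model graph have infinite degree. -/
lemma inl_infinite (x : Option ℚ) :
    (modelGraph.neighborSet (Sum.inl x : ModelVertex)).Infinite := by
  refine Set.Infinite.mono ?_ ((nbr_infinite x).image Sum.inl_injective.injOn)
  rintro v ⟨y, hy, rfl⟩
  exact hy

/-- Tilde vertices of the model graph have infinite degree. -/
lemma tilde_infinite (x : Option ℚ) :
    (modelGraph.neighborSet (Sum.inr (Sum.inl x) : ModelVertex)).Infinite := by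
  have hinj : Function.Injective
      (fun T : FareyTriangle => (Sum.inr (Sum.inr T) : ModelVertex)) := by
    intro T T' h
    simpa using h
  refine Set.Infinite.mono ?_ ((tri_infinite x).image hinj.injOn)
  rintro v ⟨T, hT, rfl⟩
  exact hT

lemma fin_iff_tri (v : ModelVertex) :
    (modelGraph.neighborSet v).Finite ↔ ∃ T, v = Sum.inr (Sum.inr T) := by
  constructor
  · rintro h
    rcases v with x | x | T
    · exact absurd h (inl_infinite x)
    · exact absurd h (tilde_infinite x)
    · exact ⟨T, rfl⟩
  · rintro ⟨T, rfl⟩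
    exact tri_fin T

lemma no_fin_nbr (x : Option ℚ) (w : ModelVertex)
    (h : modelGraph.Adj (Sum.inl x) w) : ¬ (modelGraph.neighborSet w).Finite := by
  rcases w with y | y | T
  · exact inl_infinite y
  · exact tilde_infinite y
  · exact h.elim

lemma has_fin_nbr (x : Option ℚ) : ∃ w : ModelVertex,
    modelGraph.Adj (Sum.inr (Sum.inl x)) w ∧ (modelGraph.neighborSet w).Finite := by
  obtain ⟨T, hT⟩ := (tri_infinite x).nonempty
  exact ⟨Sum.inr (Sum.inr T), hT, tri_fin T⟩

/-- Transfer of finiteness of neighbour sets along a graph isomorphism. -/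
lemma iso_fin (A : modelGraph ≃g modelGraph) (v : ModelVertex) :
    (modelGraph.neighborSet (A v)).Finite ↔ (modelGraph.neighborSet v).Finite := by
  rw [← Set.finite_coe_iff, ← Set.finite_coe_iff]
  exact Equiv.finite_iff (A.mapNeighborSet v).symm

lemma map_tri (A : modelGraph ≃g modelGraph) (T : FareyTriangle) :
    ∃ T', A (Sum.inr (Sum.inr T)) = Sum.inr (Sum.inr T') := by
  have h : (modelGraph.neighborSet (A (Sum.inr (Sum.inr T)))).Finite :=
    (iso_fin A _).mpr (tri_fin T)
  obtain ⟨T', hT'⟩ := (fin_iff_tri _).mp h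
  exact ⟨T', hT'⟩

lemma map_inl (A : modelGraph ≃g modelGraph) (x : Option ℚ) :
    ∃ y, A (Sum.inl x) = Sum.inl y := by
  rcases hv : A (Sum.inl x) with y | y | T
  · exact ⟨y, rfl⟩
  · exfalso
    obtain ⟨w, hadj, hfin⟩ := has_fin_nbr y
    have hadj' : modelGraph.Adj (Sum.inl x) (A.symm w) := by
      rw [← A.map_rel_iff, hv, A.apply_symm_apply]
      exact hadj
    refine no_fin_nbr x (A.symm w) hadj' ?_
    rw [← iso_fin A (A.symm w), A.apply_symm_apply]
    exact hfin
  · exfalso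
    have h : (modelGraph.neighborSet (A (Sum.inl x))).Finite := by
      rw [hv]; exact tri_fin T
    exact inl_infinite x ((iso_fin A _).mp h)

lemma map_tilde (A : modelGraph ≃g modelGraph) (x : Option ℚ) :
    ∃ y, A (Sum.inr (Sum.inl x)) = Sum.inr (Sum.inl y) := by
  rcases hv : A (Sum.inr (Sum.inl x)) with y | y | T
  · exfalso
    obtain ⟨w, hadj, hfin⟩ := has_fin_nbr x
    have hadj' : modelGraph.Adj (Sum.inl y) (A w) := by
      rw [← hv, A.map_rel_iff]
      exact hadj
    exact no_fin_nbr y (A w) hadj' ((iso_fin A w).mpr hfin)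
  · exact ⟨y, rfl⟩
  · exfalso
    have h : (modelGraph.neighborSet (A (Sum.inr (Sum.inl x)))).Finite := by
      rw [hv]; exact tri_fin T
    exact tilde_infinite x ((iso_fin A _).mp h)

end ModelAux

namespace ModelAux

open FareyAux

noncomputable def resIso (A : modelGraph ≃g modelGraph) : fareyGraph ≃g fareyGraph where
  toFun := fun x => (map_inl A x).choose
  invFun := fun x => (map_inl A.symm x).choose
  left_inv := by
    intro x
    apply Sum.inl_injective
    rw [← (map_inl A.symm _).choose_spec, ← (map_inl A x).choose_spec,
      A.symm_apply_apply]
  right_inv := by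
    intro x
    apply Sum.inl_injective
    rw [← (map_inl A _).choose_spec, ← (map_inl A.symm x).choose_spec,
      A.apply_symm_apply]
  map_rel_iff' := by
    intro x y
    show fareyGraph.Adj _ _ ↔ fareyGraph.Adj x y
    have h1 : modelGraph.Adj (Sum.inl ((map_inl A x).choose))
        (Sum.inl ((map_inl A y).choose)) ↔ modelGraph.Adj (Sum.inl x) (Sum.inl y) := by
      rw [← (map_inl A x).choose_spec, ← (map_inl A y).choose_spec, A.map_rel_iff]
    exact h1

lemma resIso_spec (A : modelGraph ≃g modelGraph) (x : Option ℚ) :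
    A (Sum.inl x) = Sum.inl (resIso A x) := (map_inl A x).choose_spec

lemma tilde_spec (A : modelGraph ≃g modelGraph) (x : Option ℚ) :
    A (Sum.inr (Sum.inl x)) = Sum.inr (Sum.inl (resIso A x)) := by
  obtain ⟨y, hy⟩ := map_tilde A x
  have hadj : modelGraph.Adj (A (Sum.inr (Sum.inl x))) (A (Sum.inl x)) :=
    A.map_rel_iff.mpr (show modelAdj (Sum.inr (Sum.inl x)) (Sum.inl x) from rfl)
  rw [hy, resIso_spec A x] at hadj
  have : y = resIso A x := hadj
  rw [hy, this]

def triMap (a : fareyGraph ≃g fareyGraph) (T : FareyTriangle) : FareyTriangle :=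
  ⟨T.1.image a, by
    classical
    constructor
    · rintro p hp q hq hne
      rw [Finset.mem_coe, Finset.mem_image] at hp hq
      obtain ⟨x, hx, rfl⟩ := hp
      obtain ⟨y, hy, rfl⟩ := hq
      exact a.map_rel_iff.mpr (T.2.isClique hx hy fun e => hne (congrArg a e))
    · rw [Finset.card_image_of_injective _ a.injective]
      exact T.2.card_eq⟩

lemma triMap_val (a : fareyGraph ≃g fareyGraph) (T : FareyTriangle) :
    (triMap a T).1 = T.1.image a := rfl

lemma mem_triMap (a : fareyGraph ≃g fareyGraph) (T : FareyTriangle) (x : Option ℚ) :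
    a x ∈ (triMap a T).1 ↔ x ∈ T.1 := by
  classical
  rw [triMap_val, Finset.mem_image]
  constructor
  · rintro ⟨y, hy, he⟩
    rwa [← a.injective he]
  · exact fun h => ⟨x, h, rfl⟩

noncomputable def triEquiv (a : fareyGraph ≃g fareyGraph) : FareyTriangle ≃ FareyTriangle where
  toFun := triMap a
  invFun := triMap a.symm
  left_inv := by
    intro T
    apply Subtype.ext
    show (Finset.image a T.1).image a.symm = T.1
    rw [Finset.image_image,
      show (⇑a.symm ∘ ⇑a) = id from funext fun z => a.symm_apply_apply z,
      Finset.image_id]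
  right_inv := by
    intro T
    apply Subtype.ext
    show (Finset.image a.symm T.1).image a = T.1
    rw [Finset.image_image,
      show (⇑a ∘ ⇑a.symm) = id from funext fun z => a.apply_symm_apply z,
      Finset.image_id]

noncomputable def extIso (a : fareyGraph ≃g fareyGraph) : modelGraph ≃g modelGraph where
  toEquiv := Equiv.sumCongr a.toEquiv (Equiv.sumCongr a.toEquiv (triEquiv a))
  map_rel_iff' := by
    classical
    rintro (x | x | T) (y | y | T')
    · exact a.map_rel_iff
    · show a x = a y ↔ x = y
      exact a.injective.eq_iff
    · exact Iff.rfl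
    · show a x = a y ↔ x = y
      exact a.injective.eq_iff
    · exact Iff.rfl
    · exact mem_triMap a T' x
    · exact Iff.rfl
    · exact mem_triMap a T y
    · show triMap a T ≠ triMap a T' ∧ ((triMap a T).1 ∩ (triMap a T').1).card = 2 ↔
        (T ≠ T' ∧ (T.1 ∩ T'.1).card = 2)
      rw [triMap_val, triMap_val, ← Finset.image_inter _ _ a.injective,
        Finset.card_image_of_injective _ a.injective]
      constructor
      · rintro ⟨h1, h2⟩
        exact ⟨fun e => h1 (congrArg (triMap a) e), h2⟩
      · rintro ⟨h1, h2⟩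
        refine ⟨fun e => h1 ((triEquiv a).injective e), h2⟩

lemma extIso_inl (a : fareyGraph ≃g fareyGraph) (x : Option ℚ) :
    extIso a (Sum.inl x) = Sum.inl (a x) := rfl

lemma extIso_tilde (a : fareyGraph ≃g fareyGraph) (x : Option ℚ) :
    extIso a (Sum.inr (Sum.inl x)) = Sum.inr (Sum.inl (a x)) := rfl

lemma extIso_tri (a : fareyGraph ≃g fareyGraph) (T : FareyTriangle) :
    extIso a (Sum.inr (Sum.inr T)) = Sum.inr (Sum.inr (triMap a T)) := rfl

lemma res_ext (A : modelGraph ≃g modelGraph) : extIso (resIso A) = A := by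
  classical
  apply RelIso.ext
  rintro (x | x | T)
  · rw [extIso_inl, resIso_spec]
  · rw [extIso_tilde, tilde_spec]
  · rw [extIso_tri]
    obtain ⟨T', hT'⟩ := map_tri A T
    rw [hT']
    have hsub : (triMap (resIso A) T).1 ⊆ T'.1 := by
      intro y hy
      rw [triMap_val, Finset.mem_image] at hy
      obtain ⟨x, hx, rfl⟩ := hy
      have hadj : modelGraph.Adj (A (Sum.inr (Sum.inl x))) (A (Sum.inr (Sum.inr T))) :=
        A.map_rel_iff.mpr hx
      rw [tilde_spec, hT'] at hadj
      exact hadj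
    have := Finset.eq_of_subset_of_card_le hsub
      (by rw [tri_card T', tri_card (triMap (resIso A) T)])
    rw [Subtype.ext this]

lemma ext_res (a : fareyGraph ≃g fareyGraph) : resIso (extIso a) = a := by
  apply RelIso.ext
  intro x
  apply Sum.inl_injective
  rw [← resIso_spec (extIso a) x, extIso_inl]

end ModelAux

/-- For every graph automorphism `A` of the model graph `G` there is a unique graph
automorphism `a` of the Farey graph `𝔽` with `A (.inl x) = .inl (a x)` for all `x`,
and the resulting restriction map `Aut(G) → Aut(𝔽)` is a group isomorphism, i.e. a
bijection respecting composition. -/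
theorem modelGraph_aut_restriction_iso :
    (∀ A : modelGraph ≃g modelGraph, ∃! a : fareyGraph ≃g fareyGraph,
      ∀ x : Option ℚ, A (.inl x) = .inl (a x)) ∧
    ∃ Φ : (modelGraph ≃g modelGraph) ≃ (fareyGraph ≃g fareyGraph),
      (∀ (A : modelGraph ≃g modelGraph) (x : Option ℚ),
        A (.inl x) = .inl (Φ A x)) ∧
      ∀ A B : modelGraph ≃g modelGraph, Φ (A.trans B) = (Φ A).trans (Φ B) := by
  classical
  constructor
  · intro A
    refine ⟨ModelAux.resIso A, fun x => ModelAux.resIso_spec A x, ?_⟩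
    intro a ha
    apply RelIso.ext
    intro x
    apply Sum.inl_injective
    rw [← ha x, ← ModelAux.resIso_spec A x]
  · refine ⟨⟨ModelAux.resIso, ModelAux.extIso, ModelAux.res_ext, ModelAux.ext_res⟩,
      fun A x => ModelAux.resIso_spec A x, ?_⟩
    intro A B
    apply RelIso.ext
    intro x
    have h1 : (Sum.inl (ModelAux.resIso (A.trans B) x) : ModelVertex) =
        Sum.inl ((ModelAux.resIso B) ((ModelAux.resIso A) x)) := by
      rw [← ModelAux.resIso_spec (A.trans B) x, ← ModelAux.resIso_spec B,
        ← ModelAux.resIso_spec A]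
      rfl
    exact Sum.inl_injective h1
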